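/- arXiv:2307.04224 — 2 statements merged into one kernel-verified Lean document; each statement's English description precedes it below -/
import Mathlib

section
/- For 1 ≤ k ≤ n, the derivative of the Veronese map ν at e_0 in direction e_k equals sqrt(d)·u_k, where u_k ∈ EuclideanSpace ℝ A(n,d) is the standard basis vector indexed by the exponent α with α_0 = d−1, α_k = 1 and all other entries 0; moreover the derivative of ν at e_0 in direction e_0 equals d·ν(e_0). In particular the vectors (1/sqrt(d))·Dν(e_0)(e_1), …, (1/sqrt(d))·Dν(e_0)(e_n) form an orthonormal family orthogonal to ν(e_0) (an orthonormal basis of the tangent space of the spherical Veronese variety at x_0^d). -/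
open scoped RealInnerProductSpace BigOperators

noncomputable section

/-- The set of exponent vectors `α : Fin (n+1) → ℕ` with `|α| = d`. -/
abbrev Exps (n d : ℕ) : Type := {α : Fin (n + 1) → ℕ // ∑ i, α i = d}

instance (n d : ℕ) : Fintype (Exps n d) :=
  Fintype.subtype (Finset.Nat.antidiagonalTuple (n + 1) d) fun _ =>
    Finset.Nat.mem_antidiagonalTuple

/-- The Veronese map in Bombieri–Weyl coordinates. -/
def veronese (n d : ℕ) (ℓ : EuclideanSpace ℝ (Fin (n + 1))) :
    EuclideanSpace ℝ (Exps n d) := WithLp.toLp 2 fun (α : Exps n d) =>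
  Real.sqrt ((d.factorial : ℝ) / ∏ i, ((α.1 i).factorial : ℝ)) * ∏ i, ℓ i ^ α.1 i

/-- The exponent with `d - 1` in position `0`, `1` in position `k` (`1 ≤ k ≤ n`),
and `0` elsewhere. -/
def expTang (n d : ℕ) (hd : 0 < d) (k : Fin n) : Exps n d :=
  ⟨Pi.single (0 : Fin (n + 1)) (d - 1) + Pi.single k.succ 1, by
    simp [Finset.sum_add_distrib, Nat.sub_add_cancel hd]⟩

namespace VeroneseAux

def vc (n d : ℕ) (α : Exps n d) : ℝ :=
  Real.sqrt ((d.factorial : ℝ) / ∏ i, ((α.1 i).factorial : ℝ))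

def x0 (n : ℕ) : Fin (n + 1) → ℝ := Pi.single 0 1

def expTop (n d : ℕ) : Exps n d := ⟨Pi.single 0 d, by simp⟩

def Dm (n d : ℕ) (α : Exps n d) : (Fin (n + 1) → ℝ) →L[ℝ] ℝ :=
  ∑ i : Fin (n + 1), (∏ j ∈ Finset.univ.erase i, x0 n j ^ α.1 j) •
    ((((α.1 i : ℝ)) * x0 n i ^ (α.1 i - 1)) •
      (ContinuousLinearMap.proj i : (Fin (n + 1) → ℝ) →L[ℝ] ℝ))

lemma hasFDerivAt_plain (n d : ℕ) :
    HasFDerivAt (fun ℓ : Fin (n + 1) → ℝ => fun α : Exps n d => vc n d α * ∏ i, ℓ i ^ α.1 i)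
      (ContinuousLinearMap.pi fun α => vc n d α • Dm n d α) (x0 n) := by
  apply (hasFDerivAt_pi (𝕜 := ℝ) (F' := fun _ : Exps n d => ℝ)).2
  intro α
  have h : ∀ i ∈ Finset.univ, HasFDerivAt (fun ℓ : Fin (n + 1) → ℝ => ℓ i ^ α.1 i)
      ((((α.1 i : ℝ)) * x0 n i ^ (α.1 i - 1)) •
        (ContinuousLinearMap.proj i : (Fin (n + 1) → ℝ) →L[ℝ] ℝ)) (x0 n) := by
    intro i _
    exact (hasDerivAt_pow (α.1 i) (x0 n i)).comp_hasFDerivAt (x0 n) (hasFDerivAt_apply i (x0 n))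
  exact (HasFDerivAt.finset_prod h).const_mul (vc n d α)

def Lmap (n d : ℕ) : EuclideanSpace ℝ (Fin (n + 1)) →L[ℝ] EuclideanSpace ℝ (Exps n d) :=
  (((EuclideanSpace.equiv (Exps n d) ℝ).symm.toContinuousLinearMap).comp
    (ContinuousLinearMap.pi fun α => vc n d α • Dm n d α)).comp
    (EuclideanSpace.equiv (Fin (n + 1)) ℝ).toContinuousLinearMap

lemma hasFDerivAt_veronese (n d : ℕ) :
    HasFDerivAt (veronese n d) (Lmap n d) (EuclideanSpace.single 0 1) := by
  have h := hasFDerivAt_plain n d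
  have h2 := ((EuclideanSpace.equiv (Exps n d) ℝ).symm.toContinuousLinearMap.hasFDerivAt.comp
    (x0 n) h).comp (EuclideanSpace.single (0 : Fin (n+1)) (1:ℝ))
    ((EuclideanSpace.equiv (Fin (n + 1)) ℝ).toContinuousLinearMap.hasFDerivAt)
  exact h2

lemma Dm_apply_single (n d : ℕ) (α : Exps n d) (m : Fin (n + 1)) :
    Dm n d α (Pi.single m 1) =
      (∏ j ∈ Finset.univ.erase m, x0 n j ^ α.1 j) * ((α.1 m : ℝ) * x0 n m ^ (α.1 m - 1)) := by
  simp only [Dm, ContinuousLinearMap.sum_apply, ContinuousLinearMap.smul_apply,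
    ContinuousLinearMap.proj_apply, smul_eq_mul, Pi.single_apply]
  simp [mul_ite, Finset.sum_ite_eq', mul_assoc]

lemma fderiv_apply_coord (n d : ℕ) (m : Fin (n + 1)) (α : Exps n d) :
    fderiv ℝ (veronese n d) (EuclideanSpace.single 0 1) (EuclideanSpace.single m 1) α =
      vc n d α *
        ((∏ j ∈ Finset.univ.erase m, x0 n j ^ α.1 j) * ((α.1 m : ℝ) * x0 n m ^ (α.1 m - 1))) := by
  rw [(hasFDerivAt_veronese n d).fderiv]
  show (ContinuousLinearMap.pi fun α => vc n d α • Dm n d α) (Pi.single m 1) α = _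
  rw [ContinuousLinearMap.pi_apply, ContinuousLinearMap.smul_apply, smul_eq_mul,
    Dm_apply_single]

lemma x0_zero (n : ℕ) : x0 n 0 = 1 := by simp [x0]
lemma x0_ne (n : ℕ) {j : Fin (n+1)} (h : j ≠ 0) : x0 n j = 0 := by simp [x0, h]

lemma expTang_apply_zero (n d : ℕ) (hd : 0 < d) (k : Fin n) :
    (expTang n d hd k).1 0 = d - 1 := by
  simp [expTang, Pi.single_apply, (Fin.succ_ne_zero k).symm]

lemma expTang_apply_succ (n d : ℕ) (hd : 0 < d) (k : Fin n) :
    (expTang n d hd k).1 k.succ = 1 := by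
  simp [expTang, Pi.single_apply, Fin.succ_ne_zero k]

lemma expTang_apply_other (n d : ℕ) (hd : 0 < d) (k : Fin n) {j : Fin (n+1)}
    (h0 : j ≠ 0) (hk : j ≠ k.succ) : (expTang n d hd k).1 j = 0 := by
  simp [expTang, Pi.single_apply, h0, hk]

lemma eq_expTop (n d : ℕ) (α : Exps n d) (h0 : ∀ j, j ≠ 0 → α.1 j = 0) :
    α = expTop n d := by
  have hsum : α.1 0 = d := by
    conv_rhs => rw [← α.2]
    exact (Finset.sum_eq_single 0 (fun b _ hb => h0 b hb) (by simp)).symm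
  refine Subtype.ext (funext fun j => ?_)
  by_cases hj : j = 0
  · subst hj; simpa [expTop] using hsum
  · simp [expTop, Pi.single_apply, hj, h0 j hj]

lemma eq_expTang (n d : ℕ) (hd : 0 < d) (k : Fin n) (α : Exps n d)
    (hk : α.1 k.succ = 1) (h0 : ∀ j, j ≠ 0 → j ≠ k.succ → α.1 j = 0) :
    α = expTang n d hd k := by
  have hsum : α.1 0 + 1 = d := by
    have h2 := α.2
    rw [Finset.sum_eq_add_of_mem 0 k.succ (Finset.mem_univ _) (Finset.mem_univ _)
      (Fin.succ_ne_zero k).symm (fun c _ hc => h0 c hc.1 hc.2)] at h2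
    omega
  have h0d : α.1 0 = d - 1 := by omega
  refine Subtype.ext (funext fun j => ?_)
  by_cases hj : j = 0
  · subst hj; rw [h0d, expTang_apply_zero]
  · by_cases hjk : j = k.succ
    · subst hjk; rw [hk, expTang_apply_succ]
    · rw [h0 j hj hjk, expTang_apply_other n d hd k hj hjk]

lemma expTang_ne_expTop (n d : ℕ) (hd : 0 < d) (k : Fin n) :
    expTang n d hd k ≠ expTop n d := by
  intro h
  have := congrFun (congrArg Subtype.val h) k.succ
  rw [expTang_apply_succ] at this
  simp [expTop, Pi.single_apply, Fin.succ_ne_zero k] at this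

lemma expTang_injective (n d : ℕ) (hd : 0 < d) :
    Function.Injective (expTang n d hd) := by
  intro k k' h
  by_contra hne
  have := congrFun (congrArg Subtype.val h) k.succ
  rw [expTang_apply_succ, expTang_apply_other n d hd k' (Fin.succ_ne_zero k)
    (fun hc => hne (Fin.succ_injective n hc))] at this
  exact one_ne_zero this

lemma vc_expTop (n d : ℕ) : vc n d (expTop n d) = 1 := by
  have : (∏ i, (((expTop n d).1 i).factorial : ℝ)) = (d.factorial : ℝ) := by
    rw [Finset.prod_eq_single 0 (fun b _ hb => by simp [expTop, Pi.single_apply, hb])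
      (by simp)]
    simp [expTop]
  rw [vc, this, div_self (by positivity), Real.sqrt_one]

lemma vc_expTang (n d : ℕ) (hd : 0 < d) (k : Fin n) :
    vc n d (expTang n d hd k) = Real.sqrt d := by
  have : (∏ i, (((expTang n d hd k).1 i).factorial : ℝ)) = ((d-1).factorial : ℝ) := by
    rw [Finset.prod_eq_single 0 (fun b _ hb => ?_) (by simp)]
    · rw [expTang_apply_zero]
    · by_cases hbk : b = k.succ
      · subst hbk; rw [expTang_apply_succ]; norm_num
      · rw [expTang_apply_other n d hd k hb hbk]; norm_num
  rw [vc, this]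
  congr 1
  rw [div_eq_iff (by positivity : ((d-1).factorial : ℝ) ≠ 0)]
  rw [← Nat.mul_factorial_pred hd.ne']
  push_cast
  ring

lemma veronese_e0 (n d : ℕ) :
    veronese n d (EuclideanSpace.single 0 1) = EuclideanSpace.single (expTop n d) 1 := by
  ext α
  have hcoord : ∀ i : Fin (n+1), (EuclideanSpace.single (0 : Fin (n+1)) (1:ℝ)) i = x0 n i := by
    intro i; simp [x0, Pi.single_apply, EuclideanSpace.single_apply]
  show vc n d α * ∏ i, (EuclideanSpace.single (0 : Fin (n+1)) (1:ℝ)) i ^ α.1 i = _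
  simp only [hcoord, EuclideanSpace.single_apply]
  by_cases hα : α = expTop n d
  · subst hα
    rw [if_pos rfl, vc_expTop]
    rw [Finset.prod_eq_one fun i _ => ?_]
    · ring
    · by_cases hi : i = 0
      · subst hi; rw [x0_zero, one_pow]
      · have : (expTop n d).1 i = 0 := by simp [expTop, Pi.single_apply, hi]
        rw [this, pow_zero]
  · rw [if_neg hα]
    have : ∃ j, j ≠ 0 ∧ α.1 j ≠ 0 := by
      by_contra h
      push_neg at h
      exact hα (eq_expTop n d α fun j hj => h j hj)
    obtain ⟨j, hj0, hjne⟩ := this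
    rw [Finset.prod_eq_zero (Finset.mem_univ j)]
    · ring
    · rw [x0_ne n hj0, zero_pow hjne]

lemma coord_succ (n d : ℕ) (hd : 0 < d) (k : Fin n) :
    fderiv ℝ (veronese n d) (EuclideanSpace.single 0 1) (EuclideanSpace.single k.succ 1) =
      Real.sqrt d • EuclideanSpace.single (expTang n d hd k) (1 : ℝ) := by
  ext α
  rw [fderiv_apply_coord]
  have hrhs : (Real.sqrt d • EuclideanSpace.single (expTang n d hd k) (1 : ℝ)) α =
      Real.sqrt d * (if α = expTang n d hd k then 1 else 0) := by
    simp [EuclideanSpace.single_apply]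
  rw [hrhs, x0_ne n (Fin.succ_ne_zero k)]
  by_cases hα : α = expTang n d hd k
  · subst hα
    rw [if_pos rfl, vc_expTang, expTang_apply_succ]
    rw [Finset.prod_eq_one fun j hj => ?_]
    · norm_num
    · have hj := Finset.ne_of_mem_erase hj
      by_cases hj0 : j = 0
      · subst hj0; rw [x0_zero, one_pow]
      · rw [expTang_apply_other n d hd k hj0 hj, pow_zero]
  · rw [if_neg hα, mul_zero]
    by_cases h1 : α.1 k.succ = 1
    · have : ∃ j, j ≠ 0 ∧ j ≠ k.succ ∧ α.1 j ≠ 0 := by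
        by_contra h
        push_neg at h
        exact hα (eq_expTang n d hd k α h1 fun j hj hjk => h j hj hjk)
      obtain ⟨j, hj0, hjk, hjne⟩ := this
      rw [Finset.prod_eq_zero (Finset.mem_erase.2 ⟨hjk, Finset.mem_univ j⟩)]
      · ring
      · rw [x0_ne n hj0, zero_pow hjne]
    · by_cases h0 : α.1 k.succ = 0
      · rw [h0]; norm_num
      · have h2 : α.1 k.succ - 1 ≠ 0 := by omega
        rw [zero_pow h2]
        ring

lemma coord_zero (n d : ℕ) :
    fderiv ℝ (veronese n d) (EuclideanSpace.single 0 1) (EuclideanSpace.single 0 1) =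
      (d : ℝ) • veronese n d (EuclideanSpace.single 0 1) := by
  ext α
  rw [fderiv_apply_coord, veronese_e0]
  have hrhs : ((d : ℝ) • EuclideanSpace.single (expTop n d) (1 : ℝ)) α =
      (d : ℝ) * (if α = expTop n d then 1 else 0) := by
    simp [EuclideanSpace.single_apply]
  rw [hrhs, x0_zero, one_pow]
  by_cases hα : α = expTop n d
  · subst hα
    rw [if_pos rfl, vc_expTop]
    have htop : (expTop n d).1 0 = d := by simp [expTop]
    rw [htop]
    rw [Finset.prod_eq_one fun j hj => ?_]
    · norm_num
    · have hj := Finset.ne_of_mem_erase hj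
      have : (expTop n d).1 j = 0 := by simp [expTop, Pi.single_apply, hj]
      rw [this, pow_zero]
  · rw [if_neg hα, mul_zero]
    have : ∃ j, j ≠ 0 ∧ α.1 j ≠ 0 := by
      by_contra h
      push_neg at h
      exact hα (eq_expTop n d α fun j hj => h j hj)
    obtain ⟨j, hj0, hjne⟩ := this
    rw [Finset.prod_eq_zero (Finset.mem_erase.2 ⟨hj0, Finset.mem_univ j⟩)]
    · ring
    · rw [x0_ne n hj0, zero_pow hjne]

end VeroneseAux

/-- at `e₀`, the derivative of the Veronese map `ν` in direction
`e_k` (`1 ≤ k ≤ n`) is `√d · u_k` where `u_k` is the standard basis vector indexed by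
the exponent `(d-1, 0, …, 1, …, 0)`; in direction `e₀` it is `d · ν(e₀)`; and the
vectors `(1/√d)·Dν(e₀)(e_k)` form an orthonormal family orthogonal to `ν(e₀)`. -/
theorem fderiv_veronese_at_e0 (n d : ℕ) (hn : 0 < n) (hd : 0 < d) :
    (∀ k : Fin n,
      fderiv ℝ (veronese n d) (EuclideanSpace.single 0 1)
          (EuclideanSpace.single k.succ 1) =
        Real.sqrt d • EuclideanSpace.single (expTang n d hd k) (1 : ℝ)) ∧
    fderiv ℝ (veronese n d) (EuclideanSpace.single 0 1)
        (EuclideanSpace.single 0 1) =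
      (d : ℝ) • veronese n d (EuclideanSpace.single 0 1) ∧
    Orthonormal ℝ (fun k : Fin n =>
      (1 / Real.sqrt d) •
        fderiv ℝ (veronese n d) (EuclideanSpace.single 0 1)
          (EuclideanSpace.single k.succ 1)) ∧
    (∀ k : Fin n,
      ⟪fderiv ℝ (veronese n d) (EuclideanSpace.single 0 1)
          (EuclideanSpace.single k.succ 1),
        veronese n d (EuclideanSpace.single 0 1)⟫ = 0) := by
  have hsd : Real.sqrt d ≠ 0 := by
    positivity
  refine ⟨VeroneseAux.coord_succ n d hd, VeroneseAux.coord_zero n d, ?_, ?_⟩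
  · have heq : (fun k : Fin n =>
        (1 / Real.sqrt d) •
          fderiv ℝ (veronese n d) (EuclideanSpace.single 0 1)
            (EuclideanSpace.single k.succ 1)) =
        (fun α : Exps n d => EuclideanSpace.single α (1 : ℝ)) ∘ expTang n d hd := by
      funext k
      rw [VeroneseAux.coord_succ n d hd k]
      rw [smul_smul, one_div, inv_mul_cancel₀ hsd, one_smul]
      rfl
    rw [heq]
    exact EuclideanSpace.orthonormal_single.comp _ (VeroneseAux.expTang_injective n d hd)
  · intro k
    rw [VeroneseAux.coord_succ n d hd k, VeroneseAux.veronese_e0, real_inner_smul_left]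
    have : ⟪EuclideanSpace.single (expTang n d hd k) (1:ℝ),
        EuclideanSpace.single (VeroneseAux.expTop n d) (1:ℝ)⟫ = 0 := by
      rw [EuclideanSpace.inner_single_left]
      simp [EuclideanSpace.single_apply, VeroneseAux.expTang_ne_expTop n d hd k]
    rw [this, mul_zero]
end
end

section
/- Let n ≥ 1, let w : ℝ → ℝ be differentiable at t_0, and define the curve γ(t) = ν(cos(w(t))·e_0 + sin(w(t))·e_1) in EuclideanSpace ℝ A(n,d). Then γ is differentiable at t_0 and ‖γ'(t_0)‖² = d·w'(t_0)². (In particular, such a curve is parametrized by arc length exactly when w'(t)² = 1/d, which is the key computation identifying geodesics of the spherical Veronese variety through x_0^d.) -/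
open scoped RealInnerProductSpace BigOperators

noncomputable section

namespace VCS

variable {n d : ℕ}

lemma zero_ne_one' (hn : 0 < n) : (0 : Fin (n + 1)) ≠ 1 := by
  refine Fin.ne_of_val_ne ?_
  rw [Fin.val_zero, Fin.val_one', Nat.mod_eq_of_lt (by omega : 1 < n + 1)]
  exact Nat.zero_ne_one

lemma sum01 (hn : 0 < n) (f : Fin (n + 1) → ℕ)
    (hf : ∀ i, i ≠ 0 → i ≠ 1 → f i = 0) : ∑ i, f i = f 0 + f 1 := by
  rw [← Finset.sum_subset (Finset.subset_univ ({0, 1} : Finset (Fin (n + 1))))]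
  · rw [Finset.sum_pair (zero_ne_one' hn)]
  · intro i _ hi
    simp only [Finset.mem_insert, Finset.mem_singleton] at hi
    push_neg at hi
    exact hf i hi.1 hi.2

lemma prod01 (hn : 0 < n) (f : Fin (n + 1) → ℝ) :
    ∏ i, f i = f 0 * f 1 * ∏ i ∈ Finset.univ \ ({0, 1} : Finset (Fin (n + 1))), f i := by
  rw [← Finset.prod_sdiff (Finset.subset_univ ({0, 1} : Finset (Fin (n + 1)))),
    Finset.prod_pair (zero_ne_one' hn)]
  ring

lemma ell_apply (hn : 0 < n) (c s : ℝ) (i : Fin (n + 1)) :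
    (c • EuclideanSpace.single 0 1 + s • EuclideanSpace.single 1 1 :
      EuclideanSpace ℝ (Fin (n + 1))) i = if i = 0 then c else if i = 1 then s else 0 := by
  simp only [PiLp.add_apply, PiLp.smul_apply, EuclideanSpace.single_apply, smul_eq_mul]
  split_ifs with h1 h2 <;> simp_all

/-- The coefficient part of a Veronese component along the `(0,1)`-coordinate plane. -/
def cf (n d : ℕ) (α : Exps n d) : ℝ :=
  Real.sqrt ((d.factorial : ℝ) / ∏ i, ((α.1 i).factorial : ℝ)) *
    ∏ i ∈ Finset.univ \ ({0, 1} : Finset (Fin (n + 1))), (0 : ℝ) ^ (α.1 i)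

lemma veronese_apply (hn : 0 < n) (c s : ℝ) (α : Exps n d) :
    veronese n d (c • EuclideanSpace.single 0 1 + s • EuclideanSpace.single 1 1) α
      = cf n d α * (c ^ α.1 0 * s ^ α.1 1) := by
  unfold veronese cf
  have hp : ∏ i, ((c • EuclideanSpace.single 0 1 + s • EuclideanSpace.single 1 1 :
        EuclideanSpace ℝ (Fin (n + 1))) i) ^ α.1 i
      = (c ^ α.1 0 * s ^ α.1 1) *
        ∏ i ∈ Finset.univ \ ({0, 1} : Finset (Fin (n + 1))), (0 : ℝ) ^ α.1 i := by
    rw [prod01 hn (fun i => ((c • EuclideanSpace.single 0 1 + s • EuclideanSpace.single 1 1 :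
        EuclideanSpace ℝ (Fin (n + 1))) i) ^ α.1 i)]
    have h0 : ((c • EuclideanSpace.single 0 1 + s • EuclideanSpace.single 1 1 :
        EuclideanSpace ℝ (Fin (n + 1))) 0) = c := by
      rw [ell_apply hn]; simp
    have h1 : ((c • EuclideanSpace.single 0 1 + s • EuclideanSpace.single 1 1 :
        EuclideanSpace ℝ (Fin (n + 1))) 1) = s := by
      rw [ell_apply hn, if_neg (Ne.symm (zero_ne_one' hn)), if_pos rfl]
    have h2 : ∏ i ∈ Finset.univ \ ({0, 1} : Finset (Fin (n + 1))),
        ((c • EuclideanSpace.single 0 1 + s • EuclideanSpace.single 1 1 :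
          EuclideanSpace ℝ (Fin (n + 1))) i) ^ α.1 i
        = ∏ i ∈ Finset.univ \ ({0, 1} : Finset (Fin (n + 1))), (0 : ℝ) ^ α.1 i := by
      refine Finset.prod_congr rfl fun i hi => ?_
      simp only [Finset.mem_sdiff, Finset.mem_insert, Finset.mem_singleton] at hi
      push_neg at hi
      rw [ell_apply hn, if_neg hi.2.1, if_neg hi.2.2]
    rw [h0, h1, h2]
  simp only [WithLp.ofLp_toLp]
  rw [hp]
  ring

/-- Reindexing a sum over `Exps n d` supported on the `(0,1)`-plane. -/
lemma sum_exps (hn : 0 < n) (F : Exps n d → ℝ) (f : ℕ → ℝ)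
    (h0 : ∀ α : Exps n d, ∀ i, i ≠ 0 → i ≠ 1 → α.1 i ≠ 0 → F α = 0)
    (h1 : ∀ α : Exps n d, (∀ i, i ≠ 0 → i ≠ 1 → α.1 i = 0) → F α = f (α.1 0)) :
    ∑ α : Exps n d, F α = ∑ k ∈ Finset.range (d + 1), f k := by
  classical
  have key : ∑ α ∈ Finset.univ.filter
      (fun α : Exps n d => ∀ i, i ≠ 0 → i ≠ 1 → α.1 i = 0), F α
      = ∑ α : Exps n d, F α := by
    refine Finset.sum_subset (Finset.filter_subset _ _) ?_
    intro α _ hα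
    simp only [Finset.mem_filter, Finset.mem_univ, true_and] at hα
    push_neg at hα
    obtain ⟨i, hi0, hi1, hiv⟩ := hα
    exact h0 α i hi0 hi1 hiv
  rw [← key]
  refine Finset.sum_nbij' (fun α => α.1 0)
    (fun k => ⟨fun i => if i = 0 then min k d else if i = 1 then d - k else 0, ?_⟩)
    ?_ ?_ ?_ ?_ ?_
  · rw [sum01 hn]
    · simp [Ne.symm (zero_ne_one' hn)]
      omega
    · intro i hi0 hi1
      rw [if_neg hi0, if_neg hi1]
  · intro α hα
    simp only [Finset.mem_filter, Finset.mem_univ, true_and] at hα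
    have hsum := α.2
    rw [sum01 hn _ hα] at hsum
    simp only [Finset.mem_range]
    omega
  · intro k hk
    simp only [Finset.mem_range] at hk
    simp only [Finset.mem_filter, Finset.mem_univ, true_and]
    intro i hi0 hi1
    simp [if_neg hi0, if_neg hi1]
  · intro α hα
    simp only [Finset.mem_filter, Finset.mem_univ, true_and] at hα
    have hsum := α.2
    rw [sum01 hn _ hα] at hsum
    ext i
    by_cases hi0 : i = 0
    · subst hi0; simp; omega
    · by_cases hi1 : i = 1
      · subst hi1
        simp [Ne.symm (zero_ne_one' hn)]
        omega
      · simp only [if_neg hi0, if_neg hi1]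
        exact (hα i hi0 hi1).symm
  · intro k hk
    simp only [Finset.mem_range] at hk
    simp
    omega
  · intro α hα
    simp only [Finset.mem_filter, Finset.mem_univ, true_and] at hα
    exact h1 α hα

/-- The circle curve in the Veronese image. -/
def g (n d : ℕ) (θ : ℝ) : EuclideanSpace ℝ (Exps n d) :=
  veronese n d (Real.cos θ • EuclideanSpace.single 0 1 +
    Real.sin θ • EuclideanSpace.single 1 1)

lemma g_apply (hn : 0 < n) (θ : ℝ) (α : Exps n d) :
    g n d θ α = cf n d α * (Real.cos θ ^ α.1 0 * Real.sin θ ^ α.1 1) :=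
  veronese_apply hn _ _ α

lemma g_differentiableAt (hn : 0 < n) (θ : ℝ) :
    DifferentiableAt ℝ (g n d) θ := by
  rw [differentiableAt_euclidean]
  intro α
  have : (fun θ : ℝ => g n d θ α)
      = fun θ : ℝ => cf n d α * (Real.cos θ ^ α.1 0 * Real.sin θ ^ α.1 1) := by
    funext θ; exact g_apply hn θ α
  rw [this]
  exact (((Real.differentiableAt_cos.pow _).mul
    (Real.differentiableAt_sin.pow _)).const_mul _)

/-- The Bombieri–Weyl kernel identity along the circle. -/
lemma g_inner (hn : 0 < n) (hd : 0 < d) (u v : ℝ) :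
    ⟪g n d u, g n d v⟫ = Real.cos (u - v) ^ d := by
  rw [PiLp.inner_apply]
  have hterm : ∀ α : Exps n d, ⟪g n d u α, g n d v α⟫
      = (cf n d α) ^ 2 * ((Real.cos u * Real.cos v) ^ α.1 0 *
        (Real.sin u * Real.sin v) ^ α.1 1) := by
    intro α
    rw [RCLike.inner_apply, g_apply hn, g_apply hn]
    simp only [starRingEnd_apply, star_trivial]
    rw [mul_pow, mul_pow]
    ring
  rw [Finset.sum_congr rfl fun α _ => hterm α]
  have := sum_exps (d := d) hn
    (fun α => (cf n d α) ^ 2 * ((Real.cos u * Real.cos v) ^ α.1 0 *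
        (Real.sin u * Real.sin v) ^ α.1 1))
    (fun k => (d.choose k : ℝ) * ((Real.cos u * Real.cos v) ^ k *
        (Real.sin u * Real.sin v) ^ (d - k)))
    ?_ ?_
  · rw [this]
    rw [Real.cos_sub]
    rw [add_pow]
    refine Finset.sum_congr rfl fun k hk => ?_
    ring
  · intro α i hi0 hi1 hiv
    have : cf n d α = 0 := by
      unfold cf
      have : ∏ j ∈ Finset.univ \ ({0, 1} : Finset (Fin (n + 1))), (0 : ℝ) ^ (α.1 j) = 0 := by
        apply Finset.prod_eq_zero (i := i)
        · simp only [Finset.mem_sdiff, Finset.mem_univ, true_and, Finset.mem_insert,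
            Finset.mem_singleton]
          push_neg
          exact ⟨hi0, hi1⟩
        · exact zero_pow hiv
      rw [this, mul_zero]
    rw [this]
    ring
  · intro α hα
    have hsum := α.2
    rw [sum01 hn _ hα] at hsum
    have hk : α.1 0 ≤ d := by omega
    have h1v : α.1 1 = d - α.1 0 := by omega
    have hcf : cf n d α ^ 2 = (d.choose (α.1 0) : ℝ) := by
      unfold cf
      have hprod1 : ∏ i ∈ Finset.univ \ ({0, 1} : Finset (Fin (n + 1))), (0 : ℝ) ^ (α.1 i)
          = 1 := by
        apply Finset.prod_eq_one
        intro i hi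
        simp only [Finset.mem_sdiff, Finset.mem_univ, true_and, Finset.mem_insert,
          Finset.mem_singleton] at hi
        push_neg at hi
        rw [hα i hi.1 hi.2, pow_zero]
      have hfact : ∏ i, ((α.1 i).factorial : ℝ)
          = ((α.1 0).factorial : ℝ) * ((α.1 1).factorial : ℝ) := by
        rw [prod01 hn]
        have : ∏ i ∈ Finset.univ \ ({0, 1} : Finset (Fin (n + 1))),
            ((α.1 i).factorial : ℝ) = 1 := by
          apply Finset.prod_eq_one
          intro i hi
          simp only [Finset.mem_sdiff, Finset.mem_univ, true_and, Finset.mem_insert,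
            Finset.mem_singleton] at hi
          push_neg at hi
          rw [hα i hi.1 hi.2]
          simp
        rw [this, mul_one]
      rw [hprod1, mul_one, sq, Real.mul_self_sqrt]
      · rw [hfact, h1v]
        have hch := Nat.choose_mul_factorial_mul_factorial hk
        have hne1 : ((α.1 0).factorial : ℝ) ≠ 0 := Nat.cast_ne_zero.2 (Nat.factorial_ne_zero _)
        have hne2 : (((d - α.1 0)).factorial : ℝ) ≠ 0 := Nat.cast_ne_zero.2 (Nat.factorial_ne_zero _)
        field_simp
        rw [← Nat.cast_mul, ← Nat.cast_mul, ← hch]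
        push_cast
        ring
      · positivity
    rw [← hcf, h1v]
  done

end VCS

open VCS in
/-- for `w` differentiable at `t₀`, the curve
`γ(t) = ν(cos(w(t))·e₀ + sin(w(t))·e₁)` is differentiable at `t₀` and satisfies
`‖γ'(t₀)‖² = d·w'(t₀)²`. -/
theorem veronese_curve_speed (n d : ℕ) (hn : 0 < n) (hd : 0 < d)
    (w : ℝ → ℝ) (t₀ : ℝ) (hw : DifferentiableAt ℝ w t₀) :
    DifferentiableAt ℝ
      (fun t => veronese n d
        (Real.cos (w t) • EuclideanSpace.single 0 1 +
          Real.sin (w t) • EuclideanSpace.single 1 1)) t₀ ∧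
    ‖deriv (fun t => veronese n d
        (Real.cos (w t) • EuclideanSpace.single 0 1 +
          Real.sin (w t) • EuclideanSpace.single 1 1)) t₀‖ ^ 2 =
      (d : ℝ) * (deriv w t₀) ^ 2 := by
  classical
  set θ := w t₀ with hθ
  have hgd : DifferentiableAt ℝ (g n d) θ := g_differentiableAt hn θ
  set G : EuclideanSpace ℝ (Exps n d) := deriv (g n d) θ with hG
  have hgG : HasDerivAt (g n d) G θ := hgd.hasDerivAt
  -- the inner product of G with itself is d
  have hGG : ⟪G, G⟫ = (d : ℝ) := by
    -- φ u = ⟪g u, G⟫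
    have hphi : ∀ u : ℝ, ⟪g n d u, G⟫
        = (d : ℝ) * Real.cos (u - θ) ^ (d - 1) * Real.sin (u - θ) := by
      intro u
      -- the function v ↦ ⟪g u, g v⟫ has derivative ⟪g u, G⟫ at θ
      have h1 : HasDerivAt (fun v => ⟪g n d u, g n d v⟫) ⟪g n d u, G⟫ θ := by
        have := (innerSL ℝ (g n d u)).hasFDerivAt.comp_hasDerivAt θ hgG
        exact this
      have h2 : HasDerivAt (fun v => Real.cos (u - v) ^ d)
          ((d : ℝ) * Real.cos (u - θ) ^ (d - 1) * Real.sin (u - θ)) θ := by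
        have hsub : HasDerivAt (fun v : ℝ => u - v) (-1) θ := by
          simpa using (hasDerivAt_id θ).const_sub u
        have hcos : HasDerivAt (fun v : ℝ => Real.cos (u - v))
            (Real.sin (u - θ)) θ := by
          have := (Real.hasDerivAt_cos (u - θ)).comp θ hsub
          simpa [Function.comp_def] using this
        exact hcos.pow d
      have h3 : (fun v => ⟪g n d u, g n d v⟫) = fun v => Real.cos (u - v) ^ d := by
        funext v; exact g_inner hn hd u v
      rw [h3] at h1
      exact h1.unique h2
    -- differentiate φ at θ
    have h4 : HasDerivAt (fun u => ⟪g n d u, G⟫) ⟪G, G⟫ θ := by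
      have h4' : HasDerivAt (fun u => ⟪G, g n d u⟫) ⟪G, G⟫ θ :=
        (innerSL ℝ G).hasFDerivAt.comp_hasDerivAt θ hgG
      have heq : (fun u => (⟪g n d u, G⟫ : ℝ)) = fun u => (⟪G, g n d u⟫ : ℝ) := by
        funext u; exact real_inner_comm _ _
      rw [heq]
      exact h4'
    have h5 : HasDerivAt
        (fun u => (d : ℝ) * Real.cos (u - θ) ^ (d - 1) * Real.sin (u - θ))
        ((d : ℝ)) θ := by
      have hsub : ∀ u : ℝ, HasDerivAt (fun x : ℝ => x - θ) 1 u := by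
        intro u; simpa using (hasDerivAt_id u).sub_const θ
      have hcos : HasDerivAt (fun u : ℝ => Real.cos (u - θ)) (-Real.sin (θ - θ)) θ := by
        have := (hsub θ).cos
        simpa using this
      have hsin : HasDerivAt (fun u : ℝ => Real.sin (u - θ)) (Real.cos (θ - θ)) θ := by
        have := (hsub θ).sin
        simpa using this
      have hpow : HasDerivAt (fun u : ℝ => Real.cos (u - θ) ^ (d - 1))
          ((d - 1 : ℕ) * Real.cos (θ - θ) ^ (d - 1 - 1) * (-Real.sin (θ - θ))) θ :=
        hcos.pow (d - 1)
      have hmul := (hpow.const_mul (d : ℝ)).mul hsin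
      exact hmul.congr_deriv (by simp)
    have := h4.unique (by
      have h6 : (fun u => ⟪g n d u, G⟫)
          = fun u => (d : ℝ) * Real.cos (u - θ) ^ (d - 1) * Real.sin (u - θ) := by
        funext u; exact hphi u
      rw [h6]; exact h5)
    exact this
  -- chain rule
  have hcomp : HasDerivAt (fun t => g n d (w t)) (deriv w t₀ • G) t₀ := by
    have := hgG.scomp t₀ hw.hasDerivAt
    simpa [Function.comp_def] using this
  have hnormG : ‖G‖ ^ 2 = (d : ℝ) := by
    rw [← real_inner_self_eq_norm_sq]; exact hGG
  refine ⟨hcomp.differentiableAt, ?_⟩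
  have hder : deriv (fun t => veronese n d
      (Real.cos (w t) • EuclideanSpace.single 0 1 +
        Real.sin (w t) • EuclideanSpace.single 1 1)) t₀ = deriv w t₀ • G := hcomp.deriv
  rw [hder]
  rw [norm_smul]
  rw [mul_pow, hnormG]
  simp [Real.norm_eq_abs, sq_abs]
  ring
end
end
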